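/- The function f(x) = x · ln((x−1)/(x+1)) is strictly increasing on the interval (1, +∞): for all reals z > t > 1, t·ln((t−1)/(t+1)) < z·ln((z−1)/(z+1)). -/

import Mathlib

lemma keylog {u : ℝ} (h0 : 0 < u) (h1 : u < 1) :
    (u ^ 2 - 1) / (2 * u) < Real.log u := by
  set g : ℝ → ℝ := fun x => Real.log x - (x - x⁻¹) / 2 with hg
  have hcont : ContinuousOn g (Set.Ioc 0 1) := by
    apply ContinuousOn.sub
    · exact Real.continuousOn_log.mono (fun x hx => by
        simp only [Set.mem_compl_iff, Set.mem_singleton_iff]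
        exact ne_of_gt hx.1)
    · exact ((continuousOn_id.sub (continuousOn_inv₀.mono (fun x hx => by
        simp only [Set.mem_compl_iff, Set.mem_singleton_iff]
        exact ne_of_gt hx.1))).div_const 2)
  have hderiv : ∀ x ∈ interior (Set.Ioc (0:ℝ) 1), deriv g x < 0 := by
    intro x hx
    rw [interior_Ioc] at hx
    have hx0 : x ≠ 0 := ne_of_gt hx.1
    have hd : HasDerivAt g (x⁻¹ - (1 - -(x ^ 2)⁻¹) / 2) x := by
      exact (Real.hasDerivAt_log hx0).sub
        (((hasDerivAt_id x).sub (hasDerivAt_inv hx0)).div_const 2)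
    rw [hd.deriv]
    have hxx : (0:ℝ) < x ^ 2 := by positivity
    have : x⁻¹ - (1 - -(x ^ 2)⁻¹) / 2 = -(x - 1) ^ 2 / (2 * x ^ 2) := by
      field_simp
      ring
    rw [this]
    have : (0:ℝ) < (x - 1) ^ 2 := by
      have : x - 1 ≠ 0 := by nlinarith [hx.2]
      positivity
    have h2 : (0:ℝ) < 2 * x ^ 2 := by positivity
    exact div_neg_of_neg_of_pos (by linarith) h2
  have anti : StrictAntiOn g (Set.Ioc 0 1) :=
    strictAntiOn_of_deriv_neg (convex_Ioc 0 1) hcont hderiv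
  have hu : u ∈ Set.Ioc (0:ℝ) 1 := ⟨h0, le_of_lt h1⟩
  have h1m : (1:ℝ) ∈ Set.Ioc (0:ℝ) 1 := ⟨one_pos, le_refl 1⟩
  have := anti hu h1m h1
  simp only [hg, Real.log_one, inv_one] at this
  have hgu : (0:ℝ) < Real.log u - (u - u⁻¹) / 2 := by linarith
  have heq : (u - u⁻¹) / 2 = (u ^ 2 - 1) / (2 * u) := by
    field_simp
  linarith [heq ▸ hgu]

lemma fmono : StrictMonoOn (fun x : ℝ => x * (Real.log (x - 1) - Real.log (x + 1)))
    (Set.Ioi 1) := by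
  apply strictMonoOn_of_deriv_pos (convex_Ioi 1)
  · apply ContinuousOn.mul continuousOn_id
    apply ContinuousOn.sub
    · apply Real.continuousOn_log.comp (continuousOn_id.sub continuousOn_const)
      intro x hx
      simp only [Set.mem_compl_iff, Set.mem_singleton_iff]
      have : (1:ℝ) < x := hx
      intro h; simp only [Pi.sub_apply, Pi.add_apply, id_eq] at h; nlinarith
    · apply Real.continuousOn_log.comp (continuousOn_id.add continuousOn_const)
      intro x hx
      simp only [Set.mem_compl_iff, Set.mem_singleton_iff]
      have : (1:ℝ) < x := hx
      intro h; simp only [Pi.sub_apply, Pi.add_apply, id_eq] at h; nlinarith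
  · intro x hx
    rw [interior_Ioi] at hx
    have hx1 : (1:ℝ) < x := hx
    have hm : x - 1 ≠ 0 := by intro h; nlinarith
    have hp : x + 1 ≠ 0 := by intro h; nlinarith
    have hmp : (0:ℝ) < x - 1 := by linarith
    have hpp : (0:ℝ) < x + 1 := by linarith
    have h1 : HasDerivAt (fun y : ℝ => Real.log (y - 1)) (1 / (x - 1)) x :=
      ((hasDerivAt_id x).sub_const 1).log hm
    have h2 : HasDerivAt (fun y : ℝ => Real.log (y + 1)) (1 / (x + 1)) x :=
      ((hasDerivAt_id x).add_const 1).log hp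
    have hd : HasDerivAt (fun y : ℝ => y * (Real.log (y - 1) - Real.log (y + 1)))
        (1 * (Real.log (x - 1) - Real.log (x + 1)) + x * (1 / (x - 1) - 1 / (x + 1))) x :=
      (hasDerivAt_id x).mul (h1.sub h2)
    rw [hd.deriv, one_mul]
    set u : ℝ := (x - 1) / (x + 1) with hu
    have hu0 : 0 < u := div_pos hmp hpp
    have hu1 : u < 1 := by rw [div_lt_one hpp]; linarith
    have hlog : Real.log (x - 1) - Real.log (x + 1) = Real.log u :=
      (Real.log_div hm hp).symm
    have key := keylog hu0 hu1
    have heq : x * (1 / (x - 1) - 1 / (x + 1)) = -((u ^ 2 - 1) / (2 * u)) := by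
      rw [hu]
      field_simp
      ring
    rw [hlog, heq]
    linarith

/-- The function `f(x) = x·ln((x-1)/(x+1))` is strictly increasing on `(1, +∞)`. -/
theorem statement15 (t z : ℝ) (ht : 1 < t) (hz : t < z) :
    t * Real.log ((t - 1) / (t + 1)) < z * Real.log ((z - 1) / (z + 1)) := by
  have htm : t - 1 ≠ 0 := by intro h; nlinarith
  have htp : t + 1 ≠ 0 := by intro h; nlinarith
  have hzm : z - 1 ≠ 0 := by intro h; nlinarith
  have hzp : z + 1 ≠ 0 := by intro h; nlinarith
  have := fmono (Set.mem_Ioi.mpr ht) (Set.mem_Ioi.mpr (lt_trans ht hz)) hz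
  simpa [Real.log_div htm htp, Real.log_div hzm hzp] using this
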